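/- Let p ≥ 4 and q ≥ 4, let (j₁, j₂, i₁, i₂) be a connected abstract square bridge diagram of size (p, q) with intersection count κ = Σ_{i : Fin p} (j₂ i − j₁ i + 1), and let b_F, b_{pq} be integers with b_F ≥ 1, b_{pq} ≥ 1, and b_{pq} dividing gcd(p, q). Define rational numbers g_F = (2 − b_F − (p + q − κ))/2 and g_{pq} = (2 − b_{pq} − (p + q − p·q))/2. Then g_F < g_{pq}. -/

import Mathlib

/-- An abstract square bridge diagram of size `(p, q)`: the `i`-th horizontal
segment has its two endpoints (corners) on the `j₁ i`-th and `j₂ i`-th vertical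
segments, and the `j`-th vertical segment has its endpoints on the `i₁ j`-th and
`i₂ j`-th horizontal segments. -/
structure SquareBridgeDiagram (p q : ℕ) where
  j₁ : Fin p → Fin q
  j₂ : Fin p → Fin q
  i₁ : Fin q → Fin p
  i₂ : Fin q → Fin p
  j₁_lt_j₂ : ∀ i, j₁ i < j₂ i
  i₁_lt_i₂ : ∀ j, i₁ j < i₂ j
  corner : ∀ i j, (j = j₁ i ∨ j = j₂ i) ↔ (i = i₁ j ∨ i = i₂ j)

/-- The intersection count `κ = Σ_i (j₂ i − j₁ i + 1)`: the number of pairs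
`(i, j)` with `j₁ i ≤ j ≤ j₂ i`, i.e. how many of the `q` vertical lines meet
the `i`-th horizontal segment. -/
def SquareBridgeDiagram.kappa {p q : ℕ} (D : SquareBridgeDiagram p q) : ℕ :=
  ∑ i : Fin p, ((D.j₂ i : ℕ) - (D.j₁ i : ℕ) + 1)

/-- The bipartite incidence graph of a square bridge diagram: the horizontal
segment `i` is adjacent to the vertical segment `j` exactly when the two
segments intersect, i.e. `j₁ i ≤ j ≤ j₂ i` and `i₁ j ≤ i ≤ i₂ j`. -/
def SquareBridgeDiagram.graph {p q : ℕ} (D : SquareBridgeDiagram p q) :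
    SimpleGraph (Fin p ⊕ Fin q) where
  Adj x y :=
    match x, y with
    | Sum.inl i, Sum.inr j =>
        (D.j₁ i ≤ j ∧ j ≤ D.j₂ i) ∧ (D.i₁ j ≤ i ∧ i ≤ D.i₂ j)
    | Sum.inr j, Sum.inl i =>
        (D.j₁ i ≤ j ∧ j ≤ D.j₂ i) ∧ (D.i₁ j ≤ i ∧ i ≤ D.i₂ j)
    | _, _ => False
  symm := by
    constructor
    intro x y h
    cases x <;> cases y <;> simp_all
  loopless := by
    constructor
    intro x h
    cases x <;> simp_all

/-- A square bridge diagram is connected if its bipartite incidence graph is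
connected (the corresponding link is not split). -/
def SquareBridgeDiagram.Connected {p q : ℕ} (D : SquareBridgeDiagram p q) :
    Prop :=
  D.graph.Connected

lemma sbd_pair_card {n : ℕ} (a b : Fin n) (h : a ≠ b) :
    (Finset.univ.filter (fun x : Fin n => x = a ∨ x = b)).card = 2 := by
  have he : (Finset.univ.filter (fun x : Fin n => x = a ∨ x = b)) = {a, b} := by
    ext x; simp
  rw [he, Finset.card_insert_of_notMem (by simpa using h), Finset.card_singleton]

lemma sbd_p_eq_q {p q : ℕ} (D : SquareBridgeDiagram p q) : p = q := by
  have e1 : ∀ i : Fin p,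
      (Finset.univ.filter (fun j : Fin q => j = D.j₁ i ∨ j = D.j₂ i)).card = 2 :=
    fun i => sbd_pair_card _ _ (D.j₁_lt_j₂ i).ne
  have e2 : ∀ j : Fin q,
      (Finset.univ.filter (fun i : Fin p => i = D.i₁ j ∨ i = D.i₂ j)).card = 2 :=
    fun j => sbd_pair_card _ _ (D.i₁_lt_i₂ j).ne
  have swap : ∑ i : Fin p, (Finset.univ.filter (fun j : Fin q => j = D.j₁ i ∨ j = D.j₂ i)).card
      = ∑ j : Fin q, (Finset.univ.filter (fun i : Fin p => i = D.i₁ j ∨ i = D.i₂ j)).card := by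
    simp only [Finset.card_filter]
    rw [Finset.sum_comm]
    exact Finset.sum_congr rfl fun j _ => Finset.sum_congr rfl fun i _ =>
      if_congr (D.corner i j) rfl rfl
  simp only [e1, e2, Finset.sum_const, Finset.card_univ, Fintype.card_fin, smul_eq_mul] at swap
  omega

-- fiber bounds
lemma sbd_fib1 {p q : ℕ} (D : SquareBridgeDiagram p q) (j : Fin q) :
    (Finset.univ.filter (fun i : Fin p => D.j₁ i = j)).card ≤ 2 := by
  have hsub : (Finset.univ.filter (fun i : Fin p => D.j₁ i = j))
      ⊆ (Finset.univ.filter (fun i : Fin p => i = D.i₁ j ∨ i = D.i₂ j)) := by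
    intro i hi
    simp only [Finset.mem_filter, Finset.mem_univ, true_and] at hi ⊢
    exact (D.corner i j).1 (Or.inl hi.symm)
  exact (Finset.card_le_card hsub).trans (le_of_eq (sbd_pair_card _ _ (D.i₁_lt_i₂ j).ne))

lemma sbd_fib2 {p q : ℕ} (D : SquareBridgeDiagram p q) (j : Fin q) :
    (Finset.univ.filter (fun i : Fin p => D.j₂ i = j)).card ≤ 2 := by
  have hsub : (Finset.univ.filter (fun i : Fin p => D.j₂ i = j))
      ⊆ (Finset.univ.filter (fun i : Fin p => i = D.i₁ j ∨ i = D.i₂ j)) := by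
    intro i hi
    simp only [Finset.mem_filter, Finset.mem_univ, true_and] at hi ⊢
    exact (D.corner i j).1 (Or.inr hi.symm)
  exact (Finset.card_le_card hsub).trans (le_of_eq (sbd_pair_card _ _ (D.i₁_lt_i₂ j).ne))

lemma sbd_cbound1 {p q : ℕ} (D : SquareBridgeDiagram p q) (t : ℕ) :
    (Finset.univ.filter (fun i : Fin p => (D.j₁ i : ℕ) ≤ t)).card ≤ 2 * (t + 1) := by
  have h := Finset.card_le_mul_card_image_of_maps_to (f := D.j₁)
    (s := Finset.univ.filter (fun i : Fin p => (D.j₁ i : ℕ) ≤ t))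
    (t := Finset.univ.filter (fun j : Fin q => (j : ℕ) ≤ t))
    (fun i hi => by
      simp only [Finset.mem_filter, Finset.mem_univ, true_and] at hi ⊢; exact hi)
    2 (fun b _ => by
      refine le_trans (Finset.card_le_card ?_) (sbd_fib1 D b)
      intro i hi
      simp only [Finset.mem_filter, Finset.mem_univ, true_and] at hi ⊢
      exact hi.2)
  refine h.trans ?_
  have himg : (Finset.univ.filter (fun j : Fin q => (j : ℕ) ≤ t)).card ≤ t + 1 := by
    have h2 := Finset.card_le_card_of_injOn (Fin.val (n := q))
      (s := Finset.univ.filter (fun j : Fin q => (j : ℕ) ≤ t))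
      (t := Finset.range (t + 1))
      (fun j hj => Finset.mem_range.mpr
        (by have := (Finset.mem_filter.mp hj).2; omega))
      (fun a _ b _ hab => Fin.val_injective hab)
    simpa using h2
  exact Nat.mul_le_mul_left 2 himg

lemma sbd_cbound2 {p q : ℕ} (D : SquareBridgeDiagram p q) (t : ℕ) :
    (Finset.univ.filter (fun i : Fin p => t < (D.j₂ i : ℕ))).card ≤ 2 * (q - 1 - t) := by
  have h := Finset.card_le_mul_card_image_of_maps_to (f := D.j₂)
    (s := Finset.univ.filter (fun i : Fin p => t < (D.j₂ i : ℕ)))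
    (t := Finset.univ.filter (fun j : Fin q => t < (j : ℕ)))
    (fun i hi => by
      simp only [Finset.mem_filter, Finset.mem_univ, true_and] at hi ⊢; exact hi)
    2 (fun b _ => by
      refine le_trans (Finset.card_le_card ?_) (sbd_fib2 D b)
      intro i hi
      simp only [Finset.mem_filter, Finset.mem_univ, true_and] at hi ⊢
      exact hi.2)
  refine h.trans ?_
  have himg : (Finset.univ.filter (fun j : Fin q => t < (j : ℕ))).card ≤ q - 1 - t := by
    have h2 := Finset.card_le_card_of_injOn (Fin.val (n := q))
      (s := Finset.univ.filter (fun j : Fin q => t < (j : ℕ)))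
      (t := Finset.Ico (t + 1) q)
      (fun j hj => Finset.mem_Ico.mpr
        ⟨by have := (Finset.mem_filter.mp hj).2; omega, j.isLt⟩)
      (fun a _ b _ hab => Fin.val_injective hab)
    refine h2.trans ?_
    rw [Nat.card_Ico]; omega
  exact Nat.mul_le_mul_left 2 himg

lemma sumA (n : ℕ) : ∑ t ∈ Finset.range n, 2*(t+1) = n*n + n := by
  induction n with
  | zero => simp
  | succ m ih => rw [Finset.sum_range_succ, ih]; ring

lemma sumB (n : ℕ) : ∑ t ∈ Finset.range n, 2*(n - 1 - t) = n*(n-1) := by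
  calc ∑ t ∈ Finset.range n, 2*(n - 1 - t) = ∑ t ∈ Finset.range n, 2*t :=
        Finset.sum_range_reflect (fun t => 2*t) n
    _ = (∑ t ∈ Finset.range n, t) * 2 := by
        rw [Finset.sum_mul]; exact Finset.sum_congr rfl fun t _ => by ring
    _ = n*(n-1) := Finset.sum_range_id_mul_two n


lemma sbd_kappa_bound {p q : ℕ} (hq : 4 ≤ q) (D : SquareBridgeDiagram p q) :
    D.kappa + q ≤ q * q := by
  have hpq := sbd_p_eq_q D
  subst hpq
  -- now q is gone; the size is p, with 4 ≤ p
  obtain ⟨g, hg⟩ : ∃ g, g = p / 2 := ⟨_, rfl⟩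
  obtain ⟨k, hk⟩ : ∃ k, k = p - g := ⟨_, rfl⟩
  -- sum swap
  have hswap : ∑ i : Fin p, ((D.j₂ i : ℕ) - (D.j₁ i : ℕ))
      = ∑ t ∈ Finset.range p,
          (Finset.univ.filter (fun i : Fin p => (D.j₁ i : ℕ) ≤ t ∧ t < (D.j₂ i : ℕ))).card := by
    have h1 : ∀ i : Fin p, ((D.j₂ i : ℕ) - (D.j₁ i : ℕ))
        = ((Finset.range p).filter (fun t => (D.j₁ i : ℕ) ≤ t ∧ t < (D.j₂ i : ℕ))).card := by
      intro i
      have h2 : ((Finset.range p).filter fun t => (D.j₁ i : ℕ) ≤ t ∧ t < (D.j₂ i : ℕ))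
          = Finset.Ico (D.j₁ i : ℕ) (D.j₂ i : ℕ) := by
        ext t
        simp only [Finset.mem_filter, Finset.mem_range, Finset.mem_Ico]
        have := (D.j₂ i).isLt
        omega
      rw [h2, Nat.card_Ico]
    simp only [h1, Finset.card_filter]
    rw [Finset.sum_comm]
  -- bound the column sums
  have hcol : ∀ t : ℕ,
      (Finset.univ.filter (fun i : Fin p => (D.j₁ i : ℕ) ≤ t ∧ t < (D.j₂ i : ℕ))).card
        ≤ min (2 * (t + 1)) (2 * (p - 1 - t)) := by
    intro t
    refine le_min ?_ ?_
    · refine le_trans (Finset.card_le_card ?_) (sbd_cbound1 D t)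
      intro i hi
      simp only [Finset.mem_filter, Finset.mem_univ, true_and] at hi ⊢
      exact hi.1
    · refine le_trans (Finset.card_le_card ?_) (sbd_cbound2 D t)
      intro i hi
      simp only [Finset.mem_filter, Finset.mem_univ, true_and] at hi ⊢
      exact hi.2
  have hmain : ∑ i : Fin p, ((D.j₂ i : ℕ) - (D.j₁ i : ℕ))
      ≤ (g*g + g) + k*(k - 1) := by
    rw [hswap]
    have hsplit : Finset.range p = Finset.Ico 0 g ∪ Finset.Ico g p := by
      rw [Finset.range_eq_Ico,
        Finset.Ico_union_Ico_eq_Ico (Nat.zero_le g) (by omega : g ≤ p)]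
    rw [hsplit, Finset.sum_union (Finset.Ico_disjoint_Ico_consecutive 0 g p)]
    have hA : ∑ t ∈ Finset.Ico 0 g,
        (Finset.univ.filter (fun i : Fin p => (D.j₁ i : ℕ) ≤ t ∧ t < (D.j₂ i : ℕ))).card
        ≤ g*g + g := by
      rw [← sumA g, ← Finset.range_eq_Ico]
      exact Finset.sum_le_sum fun t _ => le_trans (hcol t) (min_le_left _ _)
    have hB : ∑ t ∈ Finset.Ico g p,
        (Finset.univ.filter (fun i : Fin p => (D.j₁ i : ℕ) ≤ t ∧ t < (D.j₂ i : ℕ))).card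
        ≤ k*(k - 1) := by
      have hstep : ∑ t ∈ Finset.Ico g p,
          (Finset.univ.filter (fun i : Fin p => (D.j₁ i : ℕ) ≤ t ∧ t < (D.j₂ i : ℕ))).card
          ≤ ∑ t ∈ Finset.Ico g p, 2 * (p - 1 - t) :=
        Finset.sum_le_sum fun t _ => le_trans (hcol t) (min_le_right _ _)
      refine hstep.trans (le_of_eq ?_)
      rw [Finset.sum_Ico_eq_sum_range]
      calc ∑ t ∈ Finset.range (p - g), 2 * (p - 1 - (g + t))
          = ∑ t ∈ Finset.range k, 2 * (k - 1 - t) := by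
            rw [← hk]
            exact Finset.sum_congr rfl fun t _ => by omega
        _ = k*(k - 1) := sumB k
    exact add_le_add hA hB
  -- assemble
  have hkap : D.kappa = (∑ i : Fin p, ((D.j₂ i : ℕ) - (D.j₁ i : ℕ))) + p := by
    unfold SquareBridgeDiagram.kappa
    rw [Finset.sum_add_distrib]
    simp
  have hnum : (g*g + g) + k*(k - 1) + p + p ≤ p * p := by
    have hk2 : k = g ∨ k = g + 1 := by omega
    have hg2 : 2 ≤ g := by omega
    have hk1 : 1 ≤ k := by omega
    have hp1 : p = g + k := by omega
    rcases hk2 with rfl | rfl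
    · have hp2 : p = 2 * k := by omega
      zify [hk1]
      nlinarith [hg2, hp2]
    · have hp2 : p = 2 * g + 1 := by omega
      zify [hk1]
      nlinarith [hg2, hp2]
  omega

/-- The combinatorial form of part (4) of the main theorem: for a non-split
link given by a connected square bridge diagram with `p > 3` and `q > 3`, the
genus `g_F = (2 − b_F − (p + q − κ))/2` of the page `F` produced by the
algorithm (built from `p + q` disks and `κ` bands, with `b_F = |∂F| ≥ 1`
boundary components) is strictly smaller than the genus
`g_{pq} = (2 − b_{pq} − (p + q − pq))/2` of the torus-link Seifert surface
`F_{p,q}` (built from `p + q` disks and `pq` bands, where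
`b_{pq} = |∂F_{p,q}|` divides `gcd(p, q)`). -/
theorem genus_of_page_lt_genus_of_torus_page
    (p q : ℕ) (hp : 4 ≤ p) (hq : 4 ≤ q)
    (D : SquareBridgeDiagram p q) (hD : D.Connected)
    (bF bpq : ℤ) (hbF : 1 ≤ bF) (hbpq : 1 ≤ bpq)
    (hdvd : bpq ∣ (Nat.gcd p q : ℤ))
    (gF gpq : ℚ)
    (hgF : gF = (2 - (bF : ℚ) - ((p : ℚ) + q - D.kappa)) / 2)
    (hgpq : gpq = (2 - (bpq : ℚ) - ((p : ℚ) + q - p * q)) / 2) :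
    gF < gpq := by
  have hpq := sbd_p_eq_q D
  subst hpq
  have hkb := sbd_kappa_bound hq D
  have hbq : bpq ≤ (p : ℤ) := by
    refine Int.le_of_dvd (by exact_mod_cast Nat.lt_of_lt_of_le (by norm_num) hp) ?_
    rwa [Nat.gcd_self] at hdvd
  have c1 : (D.kappa : ℚ) + p ≤ (p : ℚ) * p := by exact_mod_cast hkb
  have c2 : (bpq : ℚ) ≤ (p : ℚ) := by exact_mod_cast hbq
  have c3 : (1 : ℚ) ≤ (bF : ℚ) := by exact_mod_cast hbF
  rw [hgF, hgpq, div_lt_div_iff₀ (by norm_num) (by norm_num)]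
  linarith
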